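/- The function f defined by f(x)=0 for rational x and f(x)=x for irrational x is, for every n≥2, n times Riemann differentiable at 0 with n-th Riemann derivative 0 (i.e., lim_{h→0} (1/h^n)·∑_{k=0}^n (-1)^k C(n,k) f((n-k)h) = 0), but f is not differentiable at 0. -/

import Mathlib

open Filter Finset

lemma nat_key (m k : ℕ) :
    (m+1).choose k * (m + 1 - k) = (m+1) * m.choose k := by
  rw [← Nat.choose_succ_right_eq, Nat.add_one_mul_choose_eq]

lemma sum_key (n : ℕ) (hn : 2 ≤ n) :
    ∑ k ∈ Finset.range (n + 1), (-1:ℝ)^k * (n.choose k : ℝ) * ((n:ℝ) - (k:ℝ)) = 0 := by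
  obtain ⟨m, rfl⟩ : ∃ m, n = m + 1 := ⟨n-1, by omega⟩
  have hm : m ≠ 0 := by omega
  rw [Finset.sum_range_succ]
  have h1 : ∀ k ∈ Finset.range (m+1),
      (-1:ℝ)^k * ((m+1).choose k : ℝ) * (((m+1:ℕ):ℝ) - (k:ℝ))
        = ((m:ℝ)+1) * ((-1:ℝ)^k * (m.choose k : ℝ)) := by
    intro k hk
    have hk' : k ≤ m := Nat.lt_succ_iff.mp (Finset.mem_range.mp hk)
    have hc : (((m+1:ℕ):ℝ) - (k:ℝ)) = ((m + 1 - k : ℕ) : ℝ) := by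
      rw [Nat.cast_sub (by omega : k ≤ m+1)]
    rw [hc]
    have h2 : (((m+1).choose k * (m + 1 - k) : ℕ) : ℝ) = (((m+1) * m.choose k : ℕ) : ℝ) := by
      exact_mod_cast congrArg (Nat.cast : ℕ → ℝ) (nat_key m k)
    rw [Nat.cast_mul, Nat.cast_mul] at h2
    push_cast [-Nat.cast_sub] at h2
    linear_combination ((-1:ℝ)^k) * h2
  rw [Finset.sum_congr rfl h1, ← Finset.mul_sum]
  have h2 : ∑ k ∈ Finset.range (m+1), (-1:ℝ)^k * (m.choose k:ℝ) = 0 := by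
    have h3 := Int.alternating_sum_range_choose_of_ne hm
    have h4 : ((∑ i ∈ Finset.range (m + 1), (-1:ℤ) ^ i * ↑(m.choose i) : ℤ) : ℝ) = ((0:ℤ):ℝ) :=
      congrArg _ h3
    push_cast at h4
    exact h4
  simp [h2]

open scoped Classical in
theorem stmt_0 (f : ℝ → ℝ) (hf : ∀ x : ℝ, f x = if Irrational x then x else 0)
    (n : ℕ) (hn : 2 ≤ n) :
    Tendsto (fun h : ℝ =>
        (1 / h ^ n) * ∑ k ∈ Finset.range (n + 1),
          (-1 : ℝ) ^ k * (n.choose k : ℝ) * f (((n : ℝ) - (k : ℝ)) * h))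
      (nhdsWithin 0 {0}ᶜ) (nhds 0)
    ∧ ¬ DifferentiableAt ℝ f 0 := by
  have h0 : f 0 = 0 := by simp [hf]
  constructor
  · have hzero : ∀ h : ℝ, ∑ k ∈ Finset.range (n+1),
        (-1:ℝ)^k * (n.choose k:ℝ) * f (((n:ℝ)-(k:ℝ))*h) = 0 := by
      intro h
      by_cases hirr : Irrational h
      · have key : ∀ k ∈ Finset.range (n+1),
            (-1:ℝ)^k * (n.choose k:ℝ) * f (((n:ℝ)-(k:ℝ))*h)
              = ((-1:ℝ)^k * (n.choose k:ℝ) * ((n:ℝ)-(k:ℝ))) * h := by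
          intro k hk
          have hk' : k ≤ n := Nat.lt_succ_iff.mp (Finset.mem_range.mp hk)
          rcases eq_or_lt_of_le hk' with rfl | hlt
          · simp [h0]
          · have hne : (n - k : ℕ) ≠ 0 := by omega
            have hcast : ((n:ℝ)-(k:ℝ)) = ((n-k:ℕ):ℝ) := by
              rw [Nat.cast_sub hk']
            have hI : Irrational (((n-k:ℕ):ℝ) * h) := hirr.natCast_mul hne
            rw [hcast, hf, if_pos hI]
            ring
        rw [Finset.sum_congr rfl key, ← Finset.sum_mul, sum_key n hn, zero_mul]
      · obtain ⟨q, rfl⟩ := not_not.mp hirr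
        apply Finset.sum_eq_zero
        intro k hk
        have hrat : ¬ Irrational (((n:ℝ)-(k:ℝ)) * (q:ℝ)) := by
          have : ((n:ℝ)-(k:ℝ)) * (q:ℝ) = ((((n:ℚ)-(k:ℚ)) * q : ℚ) : ℝ) := by push_cast; ring
          rw [this]
          exact Rat.not_irrational _
        rw [hf, if_neg hrat, mul_zero]
    simp only [hzero, mul_zero]
    exact tendsto_const_nhds
  · intro hd
    have hslope := hd.hasDerivAt
    rw [hasDerivAt_iff_tendsto_slope] at hslope
    set c := deriv f 0 with hc
    have hlim : Tendsto (fun k : ℕ => (1:ℝ)/(k+1)) atTop (nhds 0) :=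
      tendsto_one_div_add_atTop_nhds_zero_nat
    -- rational sequence
    have t1 : Tendsto (fun k : ℕ => (1:ℝ)/(k+1)) atTop (nhdsWithin 0 {0}ᶜ) := by
      apply tendsto_nhdsWithin_of_tendsto_nhds_of_eventually_within _ hlim
      filter_upwards with k
      simp only [Set.mem_compl_iff, Set.mem_singleton_iff]
      positivity
    have e1 := hslope.comp t1
    have v1 : ∀ k : ℕ, slope f 0 ((1:ℝ)/(k+1)) = 0 := by
      intro k
      have hq : ¬ Irrational ((1:ℝ)/(k+1)) := by
        have : ((1:ℝ)/(k+1)) = (((1/(k+1):ℚ)):ℝ) := by push_cast; ring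
        rw [this]; exact Rat.not_irrational _
      simp [slope_def_field, h0, hf, if_neg hq]
    have e1' : Tendsto (fun _ : ℕ => (0:ℝ)) atTop (nhds c) :=
      e1.congr fun k => by simpa [Function.comp, one_div] using v1 k
    have c0 : c = 0 := tendsto_nhds_unique e1' tendsto_const_nhds
    -- irrational sequence
    have hlim2 : Tendsto (fun k : ℕ => Real.sqrt 2/(k+1)) atTop (nhds 0) := by
      have := hlim.const_mul (Real.sqrt 2)
      simpa [mul_one_div, div_eq_mul_inv] using this
    have hirr2 : ∀ k : ℕ, Irrational (Real.sqrt 2/(k+1)) := by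
      intro k
      have : ((k:ℝ)+1) = ((k+1:ℕ):ℝ) := by push_cast; ring
      rw [this]
      exact irrational_sqrt_two.div_natCast (by omega)
    have t2 : Tendsto (fun k : ℕ => Real.sqrt 2/(k+1)) atTop (nhdsWithin 0 {0}ᶜ) := by
      apply tendsto_nhdsWithin_of_tendsto_nhds_of_eventually_within _ hlim2
      filter_upwards with k
      simp only [Set.mem_compl_iff, Set.mem_singleton_iff]
      exact (hirr2 k).ne_zero
    have e2 := hslope.comp t2
    have v2 : ∀ k : ℕ, slope f 0 (Real.sqrt 2/(k+1)) = 1 := by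
      intro k
      have hne := (hirr2 k).ne_zero
      rw [slope_def_field, h0, hf, if_pos (hirr2 k)]
      field_simp
    have e2' : Tendsto (fun _ : ℕ => (1:ℝ)) atTop (nhds c) :=
      e2.congr fun k => by simpa [Function.comp, one_div] using v2 k
    have c1 : c = 1 := tendsto_nhds_unique e2' tendsto_const_nhds
    rw [c0] at c1
    exact zero_ne_one c1
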